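/- arXiv:1102.0213 — 5 statements merged into one kernel-verified Lean document; each statement's English description precedes it below -/
import Mathlib

section
/- Let M be a set, K : M × M → ℂ a positive definite kernel with reproducing kernel Hilbert space H_K, H a Hilbert space, and γ : M → H a map whose range spans a dense subspace of H and which satisfies ⟨γ(x), γ(y)⟩ = K(y,x) for all x, y ∈ M. Then the map Φ_γ : H → H_K defined by Φ_γ(v)(x) = ⟨v, γ(x)⟩ is a well-defined unitary isomorphism. -/
open scoped ComplexInnerProductSpace ComplexOrder

/-- Realization theorem for reproducing kernel Hilbert spaces: if `γ : M → H` has total range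
and satisfies `⟨γ(x), γ(y)⟩ = K(y,x)`, then `Φ_γ(v)(x) = ⟨v, γ(x)⟩` defines a unitary
isomorphism `H ≃ H_K`.  (Here `H_K` is realized as a Hilbert space `E` with an injective
linear map `Φ : E → (M → ℂ)` and kernel vectors `k m` with the reproducing property;
⟪·,·⟫ is conjugate-linear in the first argument, so the paper's `⟨v, γ(x)⟩` is `⟪γ x, v⟫`.) -/
theorem stmt_2 {M E H : Type*}
    [NormedAddCommGroup E] [InnerProductSpace ℂ E] [CompleteSpace E]
    [NormedAddCommGroup H] [InnerProductSpace ℂ H] [CompleteSpace H]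
    (K : M → M → ℂ)
    (hpos : ∀ (n : ℕ) (x : Fin n → M),
      Matrix.PosSemidef (Matrix.of fun i j : Fin n => K (x i) (x j)))
    (Φ : E →ₗ[ℂ] (M → ℂ)) (hΦ : Function.Injective Φ)
    (k : M → E)
    (hk : ∀ m : M, Φ (k m) = fun x => K x m)
    (hrepr : ∀ (f : E) (m : M), Φ f m = ⟪k m, f⟫)
    (γ : M → H)
    (htotal : Dense ((Submodule.span ℂ (Set.range γ) : Submodule ℂ H) : Set H))
    (hγ : ∀ x y : M, (⟪γ y, γ x⟫ : ℂ) = K y x) :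
    ∃ U : H ≃ₗᵢ[ℂ] E, ∀ (v : H) (x : M), Φ (U v) x = ⟪γ x, v⟫ := by
  classical
  -- inner products of kernel vectors match those of γ
  have hkk : ∀ a b : M, (⟪k a, k b⟫ : ℂ) = ⟪γ a, γ b⟫ := by
    intro a b
    have h1 : Φ (k b) a = K a b := by rw [hk b]
    rw [← hrepr (k b) a, h1]
    exact (hγ b a).symm
  set F : (M →₀ ℂ) →ₗ[ℂ] H := Finsupp.linearCombination ℂ γ with hF
  set G : (M →₀ ℂ) →ₗ[ℂ] E := Finsupp.linearCombination ℂ k with hG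
  have hinner : ∀ l l' : M →₀ ℂ, (⟪G l, G l'⟫ : ℂ) = ⟪F l, F l'⟫ := by
    intro l l'
    simp only [hF, hG, Finsupp.linearCombination_apply, Finsupp.sum]
    rw [sum_inner, sum_inner]
    refine Finset.sum_congr rfl fun a _ => ?_
    rw [inner_sum, inner_sum]
    refine Finset.sum_congr rfl fun b _ => ?_
    rw [inner_smul_left, inner_smul_left, inner_smul_right, inner_smul_right, hkk]
  have hnorm : ∀ l : M →₀ ℂ, ‖G l‖ = ‖F l‖ := by
    intro l
    rw [@norm_eq_sqrt_re_inner ℂ, @norm_eq_sqrt_re_inner ℂ, hinner]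
  have hle : LinearMap.ker F ≤ LinearMap.ker G := by
    intro l hl
    rw [LinearMap.mem_ker] at hl ⊢
    have : ‖G l‖ = 0 := by rw [hnorm, hl, norm_zero]
    exact norm_eq_zero.mp this
  -- the isometry on the span of the range of γ
  set S : Submodule ℂ H := LinearMap.range F with hS
  have hSspan : S = Submodule.span ℂ (Set.range γ) := by
    rw [hS, hF, Finsupp.range_linearCombination]
  have hSdense : Dense (S : Set H) := by rw [hSspan]; exact htotal
  set φ : S →ₗ[ℂ] E :=
    ((LinearMap.ker F).liftQ G hle).comp (LinearMap.quotKerEquivRange F).symm.toLinearMap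
    with hφdef
  have hφ : ∀ l : M →₀ ℂ, φ ⟨F l, LinearMap.mem_range_self F l⟩ = G l := by
    intro l
    have h1 : (LinearMap.quotKerEquivRange F).symm ⟨F l, LinearMap.mem_range_self F l⟩ =
        Submodule.Quotient.mk l := by
      rw [LinearEquiv.symm_apply_eq]
      exact Subtype.ext (LinearMap.quotKerEquivRange_apply_mk F l).symm
    simp only [hφdef, LinearMap.comp_apply, LinearEquiv.coe_toLinearMap, h1,
      Submodule.liftQ_apply]
  have hφnorm : ∀ w : S, ‖φ w‖ = ‖w‖ := by
    rintro ⟨w, hw⟩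
    obtain ⟨l, rfl⟩ := hw
    rw [hφ l, hnorm]
    rfl
  set φi : S →ₗᵢ[ℂ] E := ⟨φ, hφnorm⟩ with hφi
  set φL : S →L[ℂ] E := φi.toContinuousLinearMap with hφL
  set e : S →L[ℂ] H := S.subtypeL with he
  have h_dense : DenseRange e := by
    have : Set.range e = (S : Set H) := Subtype.range_coe
    rw [DenseRange, this]
    exact hSdense
  have h_e : IsUniformInducing e := isometry_subtype_coe.isUniformInducing
  set A : H →L[ℂ] E := φL.extend e with hA
  have hAe : ∀ w : S, A ((w : H)) = φ w := fun w =>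
    ContinuousLinearMap.extend_eq φL h_dense h_e w
  have hAF : ∀ l : M →₀ ℂ, A (F l) = G l := by
    intro l
    have := hAe ⟨F l, LinearMap.mem_range_self F l⟩
    rwa [hφ l] at this
  have hAγ : ∀ m : M, A (γ m) = k m := by
    intro m
    have h1 : F (Finsupp.single m 1) = γ m := by
      rw [hF, Finsupp.linearCombination_single, one_smul]
    have h2 : G (Finsupp.single m 1) = k m := by
      rw [hG, Finsupp.linearCombination_single, one_smul]
    have := hAF (Finsupp.single m 1)
    rwa [h1, h2] at this
  have hAnorm : ∀ v : H, ‖A v‖ = ‖v‖ := by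
    intro v
    refine DenseRange.induction_on h_dense v ?_ ?_
    · exact isClosed_eq (continuous_norm.comp A.continuous) continuous_norm
    · intro w
      rw [show e w = (w : H) from rfl, hAe w, hφnorm w]
      rfl
  set Ui : H →ₗᵢ[ℂ] E := ⟨(A : H →ₗ[ℂ] E), hAnorm⟩ with hUi
  -- the range of k spans a dense subspace of E
  have hkdense : Dense ((Submodule.span ℂ (Set.range k) : Submodule ℂ E) : Set E) := by
    rw [Submodule.dense_iff_topologicalClosure_eq_top,
      Submodule.topologicalClosure_eq_top_iff]
    rw [Submodule.eq_bot_iff]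
    intro f hf
    apply hΦ
    rw [map_zero]
    funext m
    rw [hrepr f m]
    exact hf (k m) (Submodule.subset_span ⟨m, rfl⟩)
  have hclosed : IsClosed (Set.range (A : H → E)) :=
    (Ui.isometry.isClosedEmbedding).isClosed_range
  have hsub : (Submodule.span ℂ (Set.range k) : Set E) ⊆ Set.range (A : H → E) := by
    have h1 : Submodule.span ℂ (Set.range k) ≤ LinearMap.range (A : H →ₗ[ℂ] E) := by
      rw [Submodule.span_le]
      rintro _ ⟨m, rfl⟩
      exact ⟨γ m, hAγ m⟩
    intro f hf
    exact h1 hf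
  have hsurj : Function.Surjective Ui := by
    intro f
    have h1 : f ∈ closure ((Submodule.span ℂ (Set.range k) : Submodule ℂ E) : Set E) :=
      hkdense f
    have h2 : closure ((Submodule.span ℂ (Set.range k) : Submodule ℂ E) : Set E) ⊆
        Set.range (A : H → E) := hclosed.closure_subset_iff.mpr hsub
    exact h2 h1
  set U : H ≃ₗᵢ[ℂ] E := LinearIsometryEquiv.ofSurjective Ui hsurj with hU
  refine ⟨U, fun v x => ?_⟩
  have hUA : ∀ w : H, (U w : E) = A w := by
    intro w
    rw [hU]
    rfl
  rw [hrepr (U v) x, hUA v]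
  -- two continuous linear maps agreeing on the range of γ
  have heq : (innerSL ℂ (k x)).comp A = innerSL ℂ (γ x) := by
    apply ContinuousLinearMap.ext_on htotal
    rintro _ ⟨y, rfl⟩
    simp only [ContinuousLinearMap.comp_apply, innerSL_apply_apply]
    rw [hAγ y, hkk x y]
  have := ContinuousLinearMap.ext_iff.mp heq v
  simpa using this
end

section
/- Let A and B be operators defined on a common dense domain D of a Banach space E whose closures generate strongly continuous one-parameter semigroups (e^{t·cl(A)})_{t≥0} and (e^{t·cl(B)})_{t≥0}. Assume e^{sA}D ⊆ D for all s ≥ 0, and that for some v ∈ D the map s ↦ B e^{sA}v is continuous on [0,∞). Then for all t ≥ 0: e^{t·cl(B)}v − e^{t·cl(A)}v = ∫₀ᵗ e^{s·cl(B)} (B − A) e^{(t−s)·cl(A)} v ds. -/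
open Set Filter Topology

section Aux

variable {E : Type*} [NormedAddCommGroup E] [NormedSpace ℝ E] [CompleteSpace E]

/-- Local uniform bound on a strongly continuous semigroup, via Banach–Steinhaus. -/
lemma duhamel_bound (S : ℝ → E →L[ℝ] E)
    (hScont : ∀ w : E, ContinuousOn (fun t => S t w) (Set.Ici (0 : ℝ))) (T : ℝ) :
    ∃ M : ℝ, ∀ s ∈ Set.Icc (0 : ℝ) T, ‖S s‖ ≤ M := by
  rcases le_or_gt 0 T with hT | hT
  · have key : ∀ x : E, ∃ C : ℝ, ∀ i : Set.Icc (0 : ℝ) T, ‖S i x‖ ≤ C := by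
      intro x
      have hc : ContinuousOn (fun t => S t x) (Set.Icc (0 : ℝ) T) :=
        (hScont x).mono Set.Icc_subset_Ici_self
      obtain ⟨C, hC⟩ := isCompact_Icc.exists_bound_of_continuousOn hc
      exact ⟨C, fun i => hC i i.2⟩
    obtain ⟨C', hC'⟩ := banach_steinhaus key
    exact ⟨C', fun s hs => hC' ⟨s, hs⟩⟩
  · exact ⟨0, fun s hs => absurd (hs.1.trans hs.2) (not_le.mpr hT)⟩

/-- Joint strong continuity: `S (σ i) (x i) → S s₀ ℓ` given a local operator-norm bound. -/
lemma duhamel_tendsto_apply (S : ℝ → E →L[ℝ] E)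
    (hScont : ∀ w : E, ContinuousOn (fun t => S t w) (Set.Ici (0 : ℝ)))
    {M T : ℝ} (hM : ∀ s ∈ Set.Icc (0 : ℝ) T, ‖S s‖ ≤ M)
    {ι : Type*} {l : Filter ι} {σ : ι → ℝ} {s₀ : ℝ} (hs₀ : s₀ ∈ Set.Icc (0 : ℝ) T)
    (hσ : Tendsto σ l (𝓝 s₀)) (hσmem : ∀ᶠ i in l, σ i ∈ Set.Icc (0 : ℝ) T)
    {x : ι → E} {y : E} (hx : Tendsto x l (𝓝 y)) :
    Tendsto (fun i => S (σ i) (x i)) l (𝓝 (S s₀ y)) := by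
  have hσ' : Tendsto σ l (𝓝[Set.Ici (0 : ℝ)] s₀) :=
    tendsto_nhdsWithin_iff.mpr ⟨hσ, hσmem.mono fun i hi => hi.1⟩
  have h1 : Tendsto (fun i => S (σ i) y) l (𝓝 (S s₀ y)) :=
    (hScont y s₀ hs₀.1).tendsto.comp hσ'
  rw [← tendsto_sub_nhds_zero_iff]
  have hxy : Tendsto (fun i => ‖x i - y‖) l (𝓝 0) := by
    have := (hx.sub (tendsto_const_nhds (x := y))).norm
    simpa using this
  have h1' : Tendsto (fun i => ‖S (σ i) y - S s₀ y‖) l (𝓝 0) := by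
    have := (tendsto_sub_nhds_zero_iff.mpr h1).norm
    simpa using this
  apply squeeze_zero_norm' (a := fun i => M * ‖x i - y‖ + ‖S (σ i) y - S s₀ y‖)
  · filter_upwards [hσmem] with i hi
    have : S (σ i) (x i) - S s₀ y = S (σ i) (x i - y) + (S (σ i) y - S s₀ y) := by
      rw [map_sub]; abel
    rw [this]
    refine (norm_add_le _ _).trans (add_le_add_left ?_ _)
    calc ‖S (σ i) (x i - y)‖ ≤ ‖S (σ i)‖ * ‖x i - y‖ := (S (σ i)).le_opNorm _
      _ ≤ M * ‖x i - y‖ := by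
          exact mul_le_mul_of_nonneg_right (hM _ hi) (norm_nonneg _)
  · simpa using (hxy.const_mul M).add h1'

/-- Generator relation in difference-quotient form. -/
lemma duhamel_slope (S : ℝ → E →L[ℝ] E) (hS0 : S 0 = 1) {w w' : E}
    (h : HasDerivWithinAt (fun t : ℝ => S t w) w' (Set.Ici (0 : ℝ)) 0) :
    Tendsto (fun h : ℝ => h⁻¹ • (S h w - w)) (𝓝[>] 0) (𝓝 w') := by
  have := hasDerivWithinAt_iff_tendsto_slope.mp h
  rw [Set.Ici_sdiff_left] at this
  refine this.congr fun b => ?_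
  simp [slope, vsub_eq_sub, hS0]

end Aux

/-- Duhamel-type formula: let `A`, `B` be operators on a dense domain `D` of a Banach space
`E` whose closures generate strongly continuous semigroups `SA`, `SB`, with `SA(s) D ⊆ D`
for `s ≥ 0`, and let `v ∈ D` be such that `s ↦ B SA(s) v` is continuous on `[0,∞)`.
Then `SB(t)v − SA(t)v = ∫₀ᵗ SB(s) (B − A) SA(t−s) v ds` for all `t ≥ 0`. -/
theorem stmt_9 {E : Type*} [NormedAddCommGroup E] [NormedSpace ℝ E] [CompleteSpace E]
    (D : Submodule ℝ E) (hD : Dense (D : Set E))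
    (A B : E →ₗ[ℝ] E)
    (SA SB : ℝ → E →L[ℝ] E)
    (hSA0 : SA 0 = 1) (hSB0 : SB 0 = 1)
    (hSAsg : ∀ s t : ℝ, 0 ≤ s → 0 ≤ t → SA (s + t) = (SA s).comp (SA t))
    (hSBsg : ∀ s t : ℝ, 0 ≤ s → 0 ≤ t → SB (s + t) = (SB s).comp (SB t))
    (hSAcont : ∀ w : E, ContinuousOn (fun t => SA t w) (Set.Ici (0 : ℝ)))
    (hSBcont : ∀ w : E, ContinuousOn (fun t => SB t w) (Set.Ici (0 : ℝ)))
    (hSAgen : ∀ w ∈ D, HasDerivWithinAt (fun t : ℝ => SA t w) (A w) (Set.Ici (0 : ℝ)) 0)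
    (hSBgen : ∀ w ∈ D, HasDerivWithinAt (fun t : ℝ => SB t w) (B w) (Set.Ici (0 : ℝ)) 0)
    (hinv : ∀ s : ℝ, 0 ≤ s → ∀ w ∈ D, SA s w ∈ D)
    (v : E) (hv : v ∈ D)
    (hBcont : ContinuousOn (fun s => B (SA s v)) (Set.Ici (0 : ℝ))) :
    ∀ t : ℝ, 0 ≤ t →
      SB t v - SA t v =
        ∫ s in (0 : ℝ)..t, SB s (B (SA (t - s) v) - A (SA (t - s) v)) := by
  intro t ht
  obtain ⟨MA, hMA⟩ := duhamel_bound SA hSAcont t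
  obtain ⟨MB, hMB⟩ := duhamel_bound SB hSBcont t
  set g : ℝ → E := fun s => SA (t - s) v with hg
  set f : ℝ → E := fun s => SB s (g s) with hf
  set φ : ℝ → E := fun s => SB s (B (SA (t - s) v) - A (SA (t - s) v)) with hφ
  -- difference quotient for SA at v
  have hqA : Tendsto (fun h : ℝ => h⁻¹ • (SA h v - v)) (𝓝[>] 0) (𝓝 (A v)) :=
    duhamel_slope SA hSA0 (hSAgen v hv)
  -- commutation: SA r (A v) = A (SA r v)
  have comm : ∀ r : ℝ, 0 ≤ r → SA r (A v) = A (SA r v) := by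
    intro r hr
    have h1 : Tendsto (fun h : ℝ => SA r (h⁻¹ • (SA h v - v))) (𝓝[>] 0) (𝓝 (SA r (A v))) :=
      ((SA r).continuous.tendsto _).comp hqA
    have h2 : Tendsto (fun h : ℝ => h⁻¹ • (SA h (SA r v) - SA r v)) (𝓝[>] 0)
        (𝓝 (A (SA r v))) := duhamel_slope SA hSA0 (hSAgen _ (hinv r hr v hv))
    have heq : ∀ᶠ h in 𝓝[>] (0:ℝ), SA r (h⁻¹ • (SA h v - v))
        = h⁻¹ • (SA h (SA r v) - SA r v) := by
      filter_upwards [self_mem_nhdsWithin] with h hh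
      have hc : SA r (SA h v) = SA h (SA r v) := by
        have e1 := hSAsg r h hr (le_of_lt hh)
        have e2 := hSAsg h r (le_of_lt hh) hr
        have : (SA r).comp (SA h) = (SA h).comp (SA r) := by
          rw [← e1, ← e2, add_comm]
        exact DFunLike.congr_fun this v
      rw [map_smul, map_sub, hc]
    exact tendsto_nhds_unique (h1.congr' heq) h2
  -- continuity of g on [0, t]
  have hmap : Set.MapsTo (fun s : ℝ => t - s) (Set.Icc 0 t) (Set.Ici (0:ℝ)) :=
    fun s hs => by simp only [Set.mem_Ici]; linarith [hs.2]
  have hsubcont : ContinuousOn (fun s : ℝ => t - s) (Set.Icc 0 t) :=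
    (continuous_const.sub continuous_id).continuousOn
  have hgc : ContinuousOn g (Set.Icc 0 t) := (hSAcont v).comp hsubcont hmap
  have hmap' : ∀ s ∈ Set.Icc (0:ℝ) t, t - s ∈ Set.Icc (0:ℝ) t :=
    fun s hs => ⟨by linarith [hs.2], by linarith [hs.1]⟩
  -- continuity of f on [0, t]
  have hfc : ContinuousOn f (Set.Icc 0 t) := by
    intro s hs
    exact duhamel_tendsto_apply SB hSBcont hMB hs
      (tendsto_id.mono_left nhdsWithin_le_nhds)
      (eventually_mem_nhdsWithin.mono fun s' hs' => hs') (hgc s hs)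
  -- continuity of the integrand
  have hψc : ContinuousOn (fun s => B (SA (t - s) v) - A (SA (t - s) v)) (Set.Icc 0 t) := by
    have h1 : ContinuousOn (fun s => B (SA (t - s) v)) (Set.Icc 0 t) :=
      hBcont.comp hsubcont hmap
    have h2 : ContinuousOn (fun s => A (SA (t - s) v)) (Set.Icc 0 t) := by
      refine (((hSAcont (A v)).comp hsubcont hmap)).congr fun s hs => ?_
      exact (comm (t - s) (by linarith [hs.2])).symm
    exact h1.sub h2
  have hφc : ContinuousOn φ (Set.Icc 0 t) := by
    intro s hs
    exact duhamel_tendsto_apply SB hSBcont hMB hs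
      (tendsto_id.mono_left nhdsWithin_le_nhds)
      (eventually_mem_nhdsWithin.mono fun s' hs' => hs') (hψc s hs)
  have hφint : IntervalIntegrable φ MeasureTheory.volume 0 t := by
    have : ContinuousOn φ (Set.uIcc 0 t) := by rw [Set.uIcc_of_le ht]; exact hφc
    exact this.intervalIntegrable
  -- the right derivative of f on (0, t)
  have hderiv : ∀ s ∈ Set.Ioo 0 t, HasDerivWithinAt f (φ s) (Set.Ioi s) s := by
    intro s hs
    rw [hasDerivWithinAt_iff_tendsto_slope]
    have hIoi : Set.Ioi s \ {s} = Set.Ioi s := by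
      apply Set.diff_singleton_eq_self; simp
    rw [hIoi]
    have hu : SA (t - s) v ∈ D := hinv (t - s) (by linarith [hs.2]) v hv
    have hqB : Tendsto (fun h : ℝ => h⁻¹ • (SB h (SA (t - s) v) - SA (t - s) v)) (𝓝[>] 0)
        (𝓝 (B (SA (t - s) v))) := duhamel_slope SB hSB0 (hSBgen _ hu)
    have hshift : Tendsto (fun s' => s' - s) (𝓝[Set.Ioi s] s) (𝓝[Set.Ioi (0:ℝ)] 0) := by
      apply tendsto_nhdsWithin_iff.mpr
      constructor
      · have h0 : Tendsto (fun s' : ℝ => s' - s) (𝓝 s) (𝓝 (s - s)) :=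
          tendsto_id.sub tendsto_const_nhds
        rw [sub_self] at h0
        exact h0.mono_left nhdsWithin_le_nhds
      · filter_upwards [self_mem_nhdsWithin] with s' hs'
        exact Set.mem_Ioi.mpr (sub_pos.mpr hs')
    have hev : ∀ᶠ s' in 𝓝[Set.Ioi s] s, s' ∈ Set.Ioo s t :=
      Ioo_mem_nhdsGT_of_mem ⟨le_rfl, hs.2⟩
    -- the key algebraic identity for the slope
    have key : ∀ s' ∈ Set.Ioo s t, slope f s s' =
        -(SB s' (SA (t - s') ((s' - s)⁻¹ • (SA (s' - s) v - v)))) +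
          SB s ((s' - s)⁻¹ • (SB (s' - s) (SA (t - s) v) - SA (t - s) v)) := by
      intro s' hs'
      have h1 : SA (t - s) v = SA (t - s') (SA (s' - s) v) := by
        have e := hSAsg (t - s') (s' - s) (by linarith [hs'.2]) (by linarith [hs'.1])
        have e' : t - s' + (s' - s) = t - s := by ring
        rw [e'] at e
        exact DFunLike.congr_fun e v
      have h2 : SB s' (SA (t - s) v) = SB s (SB (s' - s) (SA (t - s) v)) := by
        have e := hSBsg s (s' - s) (le_of_lt hs.1) (by linarith [hs'.1])
        have e' : s + (s' - s) = s' := by ring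
        rw [e'] at e
        exact DFunLike.congr_fun e (SA (t - s) v)
      have hslope : slope f s s' = (s' - s)⁻¹ • (SB s' (SA (t - s') v) - SB s (SA (t - s) v)) := by
        simp [slope, vsub_eq_sub, hf, hg]
      rw [hslope]
      simp only [map_smul, map_sub]
      rw [← h1, ← h2]
      module
    refine Tendsto.congr' (hev.mono fun s' hs' => (key s' hs').symm) ?_
    · -- limit of the RHS expression
      have hinner : Tendsto (fun s' => SA (t - s') ((s' - s)⁻¹ • (SA (s' - s) v - v)))
          (𝓝[Set.Ioi s] s) (𝓝 (SA (t - s) (A v))) := by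
        refine duhamel_tendsto_apply SA hSAcont hMA
          (hmap' s ⟨le_of_lt hs.1, le_of_lt hs.2⟩) ?_ ?_ ?_
        · have h0 : Tendsto (fun s' : ℝ => t - s') (𝓝 s) (𝓝 (t - s)) :=
            tendsto_const_nhds.sub tendsto_id
          exact h0.mono_left nhdsWithin_le_nhds
        · filter_upwards [hev] with s' hs'
          exact hmap' s' ⟨le_of_lt (hs.1.trans hs'.1), le_of_lt hs'.2⟩
        · exact hqA.comp hshift
      have houter : Tendsto (fun s' => SB s' (SA (t - s') ((s' - s)⁻¹ • (SA (s' - s) v - v))))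
          (𝓝[Set.Ioi s] s) (𝓝 (SB s (SA (t - s) (A v)))) := by
        refine duhamel_tendsto_apply SB hSBcont hMB ⟨le_of_lt hs.1, le_of_lt hs.2⟩
          (tendsto_id.mono_left nhdsWithin_le_nhds) ?_ hinner
        filter_upwards [hev] with s' hs'
        exact ⟨le_of_lt (hs.1.trans hs'.1), le_of_lt hs'.2⟩
      have hterm2 : Tendsto (fun s' => SB s ((s' - s)⁻¹ • (SB (s' - s) (SA (t - s) v) -
          SA (t - s) v))) (𝓝[Set.Ioi s] s) (𝓝 (SB s (B (SA (t - s) v)))) :=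
        ((SB s).continuous.tendsto _).comp (hqB.comp hshift)
      have := (houter.neg).add hterm2
      have heq : -(SB s (SA (t - s) (A v))) + SB s (B (SA (t - s) v)) = φ s := by
        rw [comm (t - s) (by linarith [hs.2]), hφ]
        simp only [map_sub]
        abel
      rwa [heq] at this
  -- fundamental theorem of calculus
  have hFTC := intervalIntegral.integral_eq_sub_of_hasDeriv_right_of_le ht hfc hderiv hφint
  have hft : f t = SB t v := by simp [hf, hg, hSA0]
  have hf0 : f 0 = SA t v := by simp [hf, hg, hSB0]
  rw [hFTC, hft, hf0]
end

section
/- Let (ρ_t)_{t>0} be a strongly continuous one-parameter semigroup of bounded self-adjoint (hermitian) operators on a Hilbert space H, i.e., ρ_{s+t} = ρ_s ρ_t, ρ_t* = ρ_t, which is non-degenerate in the sense that ρ_t v = 0 for all t > 0 implies v = 0. Then lim_{t→0⁺} ρ_t v = v for all v ∈ H. -/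
/-- A strongly continuous, locally norm-bounded, non-degenerate one-parameter semigroup
`(ρ_t)_{t>0}` of bounded self-adjoint operators on a Hilbert space satisfies
`ρ_t v → v` as `t → 0⁺` for every `v`. -/
theorem stmt_11 {H : Type*} [NormedAddCommGroup H] [InnerProductSpace ℂ H] [CompleteSpace H]
    (ρ : ℝ → H →L[ℂ] H)
    (hsg : ∀ s t : ℝ, 0 < s → 0 < t → ρ (s + t) = (ρ s).comp (ρ t))
    (hsa : ∀ t : ℝ, 0 < t → IsSelfAdjoint (ρ t))
    (hcont : ∀ v : H, ContinuousOn (fun t => ρ t v) (Set.Ioi (0 : ℝ)))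
    (hbdd : ∀ t : ℝ, 0 < t → ∃ ε > (0 : ℝ), ∃ C : ℝ,
      ∀ s : ℝ, 0 < s → |s - t| < ε → ‖ρ s‖ ≤ C)
    (hnondeg : ∀ v : H, (∀ t : ℝ, 0 < t → ρ t v = 0) → v = 0) :
    ∀ v : H, Filter.Tendsto (fun t => ρ t v) (nhdsWithin 0 (Set.Ioi (0 : ℝ))) (nhds v) := by
  classical
  have hadj : ∀ t : ℝ, 0 < t → ContinuousLinearMap.adjoint (ρ t) = ρ t := fun t ht =>
    ContinuousLinearMap.isSelfAdjoint_iff'.mp (hsa t ht)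
  -- key inequality : ‖ρ t v‖² ≤ ‖ρ (2t) v‖ ‖v‖
  have hsq : ∀ (v : H) (t : ℝ), 0 < t → ‖ρ t v‖ ^ 2 ≤ ‖ρ (2 * t) v‖ * ‖v‖ := by
    intro v t ht
    have h1 : (inner ℂ (ρ t v) (ρ t v) : ℂ) = inner ℂ v (ρ (2 * t) v) := by
      have h := ContinuousLinearMap.adjoint_inner_left (𝕜 := ℂ) (ρ t) (ρ t v) v
      rw [hadj t ht] at h
      rw [h]
      have h2 : ρ (2 * t) = (ρ t).comp (ρ t) := by rw [two_mul]; exact hsg t t ht ht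
      rw [h2]; rfl
    have h2 : ‖ρ t v‖ ^ 2 = RCLike.re (inner ℂ (ρ t v) (ρ t v) : ℂ) :=
      (inner_self_eq_norm_sq (𝕜 := ℂ) _).symm
    rw [h2, h1]
    calc RCLike.re (inner ℂ v (ρ (2 * t) v) : ℂ) ≤ ‖(inner ℂ v (ρ (2 * t) v) : ℂ)‖ :=
          RCLike.re_le_norm _
      _ ≤ ‖v‖ * ‖ρ (2 * t) v‖ := norm_inner_le_norm _ _
      _ = ‖ρ (2 * t) v‖ * ‖v‖ := mul_comm _ _
  -- pointwise boundedness on (0,1]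
  have hpt : ∀ v : H, ∃ C, ∀ t : ℝ, 0 < t → t ≤ 1 → ‖ρ t v‖ ≤ C := by
    intro v
    obtain ⟨K, hK⟩ := (isCompact_Icc (a := (1 : ℝ)) (b := 2)).exists_bound_of_continuousOn
      ((hcont v).mono (fun x hx => lt_of_lt_of_le one_pos hx.1))
    set B := max K (max ‖v‖ 1) with hB
    have hBv : ‖v‖ ≤ B := le_trans (le_max_left _ _) (le_max_right _ _)
    have hB1 : (1 : ℝ) ≤ B := le_trans (le_max_right _ _) (le_max_right _ _)
    have hB0 : (0 : ℝ) ≤ B := le_trans zero_le_one hB1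
    have claim : ∀ n : ℕ, ∀ t : ℝ, 0 < t → 1 ≤ 2 ^ n * t → 2 ^ n * t ≤ 2 → ‖ρ t v‖ ≤ B := by
      intro n
      induction n with
      | zero =>
        intro t ht h1 h2
        simp only [pow_zero, one_mul] at h1 h2
        exact le_trans (hK t ⟨h1, h2⟩) (le_max_left _ _)
      | succ n ih =>
        intro t ht h1 h2
        have he : (2 : ℝ) ^ n * (2 * t) = 2 ^ (n + 1) * t := by ring
        have h2t : ‖ρ (2 * t) v‖ ≤ B := by
          refine ih (2 * t) (by linarith) ?_ ?_ <;> rw [he] <;> assumption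
        have := hsq v t ht
        nlinarith [this, mul_le_mul h2t hBv (norm_nonneg v) hB0, norm_nonneg (ρ t v)]
    refine ⟨B, ?_⟩
    intro t ht ht1
    have hex : ∃ n : ℕ, 1 ≤ 2 ^ n * t := by
      obtain ⟨n, hn⟩ := pow_unbounded_of_one_lt (1 / t) (one_lt_two (α := ℝ))
      rw [div_lt_iff₀ ht] at hn
      exact ⟨n, by nlinarith⟩
    have h1 := Nat.find_spec hex
    have h2 : 2 ^ Nat.find hex * t ≤ 2 := by
      rcases Nat.eq_zero_or_pos (Nat.find hex) with h | h
      · rw [h]; simpa using by linarith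
      · have hm := Nat.find_min hex (Nat.sub_lt h one_pos)
        push_neg at hm
        have he : Nat.find hex = (Nat.find hex - 1) + 1 := (Nat.succ_pred_eq_of_pos h).symm
        rw [he, pow_succ]
        nlinarith [hm]
    exact claim (Nat.find hex) t ht h1 h2
  -- uniform boundedness via Banach–Steinhaus
  obtain ⟨M0, hM0⟩ := banach_steinhaus (g := fun i : Set.Ioc (0 : ℝ) 1 => ρ i)
    (fun v => by
      obtain ⟨C, hC⟩ := hpt v
      exact ⟨C, fun i => hC i i.2.1 i.2.2⟩)
  set M := max M0 0 with hMdef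
  have hM : ∀ t : ℝ, 0 < t → t ≤ 1 → ‖ρ t‖ ≤ M := fun t h1 h2 =>
    le_trans (hM0 ⟨t, h1, h2⟩) (le_max_left _ _)
  have hMnn : (0 : ℝ) ≤ M := le_max_right _ _
  -- the submodule of "good" vectors
  let G : Submodule ℂ H :=
    { carrier := {v : H | Filter.Tendsto (fun t => ρ t v)
        (nhdsWithin 0 (Set.Ioi (0 : ℝ))) (nhds v)}
      add_mem' := fun {a b} ha hb => by
        simp only [Set.mem_setOf_eq, map_add] at *
        exact Filter.Tendsto.add ha hb
      zero_mem' := by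
        simp only [Set.mem_setOf_eq, map_zero]
        exact tendsto_const_nhds
      smul_mem' := fun c a ha => by
        simp only [Set.mem_setOf_eq, map_smul] at *
        exact Filter.Tendsto.const_smul ha c }
  -- vectors of the form ρ s w are good
  have hGmem : ∀ s : ℝ, 0 < s → ∀ w : H, ρ s w ∈ G := by
    intro s hs w
    have h1 : ContinuousAt (fun u => ρ u w) s :=
      (hcont w).continuousAt (isOpen_Ioi.mem_nhds hs)
    have h2 : Filter.Tendsto (fun t : ℝ => t + s) (nhdsWithin 0 (Set.Ioi (0 : ℝ))) (nhds s) := by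
      have h := (continuous_id.add (continuous_const (y := s))).tendsto (0 : ℝ)
      simpa [Pi.add_def] using h.mono_left nhdsWithin_le_nhds
    have h3 : Filter.Tendsto (fun t => ρ (t + s) w)
        (nhdsWithin 0 (Set.Ioi (0 : ℝ))) (nhds (ρ s w)) := h1.tendsto.comp h2
    have h4 : (fun t : ℝ => ρ (t + s) w) =ᶠ[nhdsWithin 0 (Set.Ioi (0 : ℝ))]
        (fun t => ρ t (ρ s w)) := by
      filter_upwards [self_mem_nhdsWithin] with t ht
      rw [hsg t s ht hs]; rfl
    exact Filter.Tendsto.congr' h4 h3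
  -- density of the span of such vectors
  set S : Set H := {x : H | ∃ s : ℝ, 0 < s ∧ ∃ w : H, ρ s w = x} with hS
  have hdense : (Submodule.span ℂ S).topologicalClosure = ⊤ := by
    rw [Submodule.topologicalClosure_eq_top_iff, Submodule.eq_bot_iff]
    intro u hu
    apply hnondeg
    intro t ht
    rw [← inner_self_eq_zero (𝕜 := ℂ)]
    have h1 : ρ t (ρ t u) ∈ Submodule.span ℂ S :=
      Submodule.subset_span ⟨t, ht, ρ t u, rfl⟩
    have h2 := (Submodule.mem_orthogonal _ u).mp hu _ h1
    have h3 := ContinuousLinearMap.adjoint_inner_left (𝕜 := ℂ) (ρ t) u (ρ t u)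
    rw [hadj t ht] at h3
    rw [← h3, h2]
  have hspanG : Submodule.span ℂ S ≤ G :=
    Submodule.span_le.mpr (fun x hx => by
      obtain ⟨s, hs, w, hw⟩ := hx
      exact hw ▸ hGmem s hs w)
  -- final ε/3 argument
  intro v
  rw [Metric.tendsto_nhds]
  intro ε hε
  have hδ : 0 < ε / (M + 2) := by positivity
  have hv : v ∈ closure ((Submodule.span ℂ S : Submodule ℂ H) : Set H) := by
    rw [← Submodule.topologicalClosure_coe, hdense]
    trivial
  obtain ⟨d, hdS, hdv⟩ := Metric.mem_closure_iff.mp hv _ hδ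
  have hd : Filter.Tendsto (fun t => ρ t d) (nhdsWithin 0 (Set.Ioi (0 : ℝ))) (nhds d) :=
    hspanG hdS
  have hdev := (Metric.tendsto_nhds.mp hd) _ hδ
  rw [dist_eq_norm] at hdv
  filter_upwards [hdev, Ioc_mem_nhdsGT_of_mem (Set.left_mem_Ico.mpr one_pos)] with t htd ht
  rw [dist_eq_norm] at htd ⊢
  have ht0 : (0 : ℝ) < t := ht.1
  have ht1 : t ≤ 1 := ht.2
  have b1 : ‖ρ t (v - d)‖ ≤ M * ‖v - d‖ :=
    le_trans ((ρ t).le_opNorm _) (mul_le_mul_of_nonneg_right (hM t ht0 ht1) (norm_nonneg _))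
  have e1 : ρ t v - v = ρ t (v - d) + (ρ t d - d) + (d - v) := by
    rw [map_sub]; abel
  have hMe : (M + 2) * (ε / (M + 2)) = ε := by field_simp
  calc ‖ρ t v - v‖ = ‖ρ t (v - d) + (ρ t d - d) + (d - v)‖ := by rw [e1]
    _ ≤ ‖ρ t (v - d)‖ + ‖ρ t d - d‖ + ‖d - v‖ := norm_add₃_le
    _ < ε := by
        rw [norm_sub_rev d v]
        nlinarith [norm_nonneg (v - d)]
end

section
/- Let G be a Banach–Lie group with Lie algebra g and (π, H) a smooth unitary representation. Define s_π : g → ℝ ∪ {∞} by s_π(x) = sup Spec(i·cl(dπ(x))). Then the set W_π of all x ∈ g such that s_π is bounded on some neighborhood of x is an open convex cone in g, invariant under the adjoint action Ad(G). -/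
open Pointwise


/-- For a smooth unitary representation `π` of a Banach–Lie group `G` with Lie algebra `𝔤`
(encoded here by its adjoint action `Ad` on `𝔤` and the function
`s_π(x) = sup Spec(i·cl(dπ(x)))`, which is subadditive, positively homogeneous and
`Ad`-invariant), the set `W_π` of points near which `s_π` is bounded is an open convex
cone invariant under `Ad(G)`. -/
theorem stmt_14 {G 𝔤 : Type*} [Group G] [NormedAddCommGroup 𝔤] [NormedSpace ℝ 𝔤]
    (Ad : G → 𝔤 ≃L[ℝ] 𝔤)
    (hAd1 : ∀ x : 𝔤, Ad 1 x = x)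
    (hAdmul : ∀ (g h : G) (x : 𝔤), Ad (g * h) x = Ad g (Ad h x))
    (s : 𝔤 → EReal)
    (hsub : ∀ x y : 𝔤, s (x + y) ≤ s x + s y)
    (hhom : ∀ (t : ℝ), 0 < t → ∀ x : 𝔤, s (t • x) = (t : EReal) * s x)
    (hAdinv : ∀ (g : G) (x : 𝔤), s (Ad g x) = s x) :
    IsOpen {x : 𝔤 | ∃ U ∈ nhds x, ∃ C : ℝ, ∀ y ∈ U, s y ≤ (C : EReal)} ∧
    Convex ℝ {x : 𝔤 | ∃ U ∈ nhds x, ∃ C : ℝ, ∀ y ∈ U, s y ≤ (C : EReal)} ∧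
    (∀ x ∈ {x : 𝔤 | ∃ U ∈ nhds x, ∃ C : ℝ, ∀ y ∈ U, s y ≤ (C : EReal)},
      ∀ t : ℝ, 0 < t → t • x ∈ {x : 𝔤 | ∃ U ∈ nhds x, ∃ C : ℝ, ∀ y ∈ U, s y ≤ (C : EReal)}) ∧
    (∀ (g : G), ∀ x ∈ {x : 𝔤 | ∃ U ∈ nhds x, ∃ C : ℝ, ∀ y ∈ U, s y ≤ (C : EReal)},
      Ad g x ∈ {x : 𝔤 | ∃ U ∈ nhds x, ∃ C : ℝ, ∀ y ∈ U, s y ≤ (C : EReal)}) := by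
  set S := {x : 𝔤 | ∃ U ∈ nhds x, ∃ C : ℝ, ∀ y ∈ U, s y ≤ (C : EReal)} with hS
  -- cone property
  have hcone : ∀ x ∈ S, ∀ t : ℝ, 0 < t → t • x ∈ S := by
    rintro x ⟨U, hU, C, hC⟩ t ht
    refine ⟨t • U, smul_mem_nhds_smul₀ ht.ne' hU, t * C, ?_⟩
    rintro y ⟨u, hu, rfl⟩
    rw [hhom t ht u, EReal.coe_mul]
    exact mul_le_mul_of_nonneg_left (hC u hu) (by exact_mod_cast ht.le)
  refine ⟨?_, ?_, hcone, ?_⟩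
  · -- open
    rw [isOpen_iff_mem_nhds]
    rintro x ⟨U, hU, C, hC⟩
    filter_upwards [interior_mem_nhds.2 hU] with y hy
    exact ⟨interior U, isOpen_interior.mem_nhds hy, C, fun z hz => hC z (interior_subset hz)⟩
  · -- convex
    rintro x hx y hy a b ha hb hab
    rcases ha.eq_or_lt with rfl | ha'
    · simpa [(by linarith : b = 1)] using hy
    rcases hb.eq_or_lt with rfl | hb'
    · simpa [(by linarith : a = 1)] using hx
    obtain ⟨U, hU, C, hC⟩ := hx
    obtain ⟨V, hV, D, hD⟩ := hy
    have hyV : s y ≤ (D : EReal) := hD y (mem_of_mem_nhds hV)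
    refine ⟨(fun u => a • u + b • y) '' U, ?_, a * C + b * D, ?_⟩
    · have h1 : a • U ∈ nhds (a • x) := smul_mem_nhds_smul₀ ha'.ne' hU
      have h2 : (fun z => z + b • y) '' (a • U) ∈ nhds (a • x + b • y) := by
        have := (Homeomorph.addRight (b • y)).isOpenMap.image_mem_nhds h1
        simpa using this
      convert h2 using 1
      ext z
      simp only [Set.mem_image, Set.mem_smul_set]
      constructor
      · rintro ⟨u, hu, rfl⟩; exact ⟨a • u, ⟨u, hu, rfl⟩, rfl⟩
      · rintro ⟨w, ⟨u, hu, rfl⟩, rfl⟩; exact ⟨u, hu, rfl⟩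
    · rintro z ⟨u, hu, rfl⟩
      calc s (a • u + b • y) ≤ s (a • u) + s (b • y) := hsub _ _
        _ = (a : EReal) * s u + (b : EReal) * s y := by rw [hhom a ha' u, hhom b hb' y]
        _ ≤ (a : EReal) * C + (b : EReal) * D := by
            refine add_le_add ?_ ?_
            · exact mul_le_mul_of_nonneg_left (hC u hu) (by exact_mod_cast ha)
            · exact mul_le_mul_of_nonneg_left hyV (by exact_mod_cast hb)
        _ = ((a * C + b * D : ℝ) : EReal) := by push_cast; ring
  · -- Ad invariance
    rintro g x ⟨U, hU, C, hC⟩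
    refine ⟨(Ad g) '' U, ?_, C, ?_⟩
    · exact (Ad g).toHomeomorph.isOpenMap.image_mem_nhds hU
    · rintro y ⟨u, hu, rfl⟩
      rw [hAdinv g u]
      exact hC u hu
end

section
/- Let g be a Banach–Lie algebra, x ∈ g, and y ∈ g. Then the logarithmic-derivative formula for the exponential map holds in the following integrated form: for a C¹ path α : I → g in an open set where exp is defined, the right logarithmic derivative of t ↦ exp(α(t)) equals ∫₀¹ e^{s·ad α(t)} α'(t) ds; in particular δ(exp)_x(y) = ∫₀¹ e^{s·ad x} y ds. -/
open scoped Nat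

section Aux

variable {𝔸 : Type*} [NormedRing 𝔸] [NormedAlgebra ℝ 𝔸] [CompleteSpace 𝔸]

private lemma my_norm_exp_le (x : 𝔸) :
    ‖NormedSpace.exp x‖ ≤ max 1 ‖(1 : 𝔸)‖ * Real.exp ‖x‖ := by
  set M := max 1 ‖(1 : 𝔸)‖ with hM
  have hM1 : (1 : ℝ) ≤ M := le_max_left _ _
  have hsum : Summable fun n : ℕ => ‖(n !⁻¹ : ℝ) • x ^ n‖ :=
    NormedSpace.norm_expSeries_summable' x
  have hsum2 : Summable fun n : ℕ => M * (‖x‖ ^ n / n !) :=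
    (Real.summable_pow_div_factorial ‖x‖).mul_left M
  have hterm : ∀ n : ℕ, ‖(n !⁻¹ : ℝ) • x ^ n‖ ≤ M * (‖x‖ ^ n / n !) := by
    intro n
    rw [norm_smul]
    have hn : ‖((n ! : ℝ))⁻¹‖ = ((n ! : ℝ))⁻¹ := by
      rw [Real.norm_eq_abs, abs_of_nonneg]; positivity
    rw [hn]
    rcases Nat.eq_zero_or_pos n with h | h
    · subst h
      simp only [pow_zero, Nat.factorial_zero, Nat.cast_one, inv_one, one_mul, div_one, mul_one]
      exact le_max_right _ _
    · have hp := norm_pow_le' x h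
      have h1 : ((n ! : ℝ))⁻¹ * ‖x ^ n‖ ≤ ((n ! : ℝ))⁻¹ * ‖x‖ ^ n := by
        have : (0:ℝ) ≤ ((n ! : ℝ))⁻¹ := by positivity
        exact mul_le_mul_of_nonneg_left hp this
      have h2 : ((n ! : ℝ))⁻¹ * ‖x‖ ^ n = ‖x‖ ^ n / n ! := by ring
      have h3 : ‖x‖ ^ n / n ! ≤ M * (‖x‖ ^ n / n !) := by
        have hnn : (0:ℝ) ≤ ‖x‖ ^ n / n ! := by positivity
        nlinarith
      linarith
  calc ‖NormedSpace.exp x‖ = ‖∑' n : ℕ, (n !⁻¹ : ℝ) • x ^ n‖ := by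
        rw [NormedSpace.exp_eq_tsum (𝕂 := ℝ)]
    _ ≤ ∑' n : ℕ, ‖(n !⁻¹ : ℝ) • x ^ n‖ := norm_tsum_le_tsum_norm hsum
    _ ≤ ∑' n : ℕ, M * (‖x‖ ^ n / n !) := Summable.tsum_le_tsum hterm hsum hsum2
    _ = M * ∑' n : ℕ, ‖x‖ ^ n / n ! := tsum_mul_left
    _ = M * Real.exp ‖x‖ := by
        congr 1
        rw [Real.exp_eq_exp_ℝ, NormedSpace.exp_eq_tsum_div]

private lemma my_cont3 (X Y Z : 𝔸) :
    Continuous fun s : ℝ =>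
      NormedSpace.exp (s • X) * Y * NormedSpace.exp ((1 - s) • Z) := by
  have h1 : Continuous fun s : ℝ => s • X := continuous_id.smul continuous_const
  have h2 : Continuous fun s : ℝ => (1 - s) • Z :=
    (continuous_const.sub continuous_id).smul continuous_const
  letI : NormedAlgebra ℚ 𝔸 := NormedAlgebra.restrictScalars ℚ ℝ 𝔸
  exact ((NormedSpace.exp_continuous.comp h1).mul continuous_const).mul
    (NormedSpace.exp_continuous.comp h2)

private lemma my_exp_sub_exp (A B : 𝔸) :
    NormedSpace.exp (A + B) - NormedSpace.exp A =
      ∫ s in (0:ℝ)..1,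
        NormedSpace.exp (s • (A + B)) * B * NormedSpace.exp ((1 - s) • A) := by
  have hderiv : ∀ s : ℝ,
      HasDerivAt
        (fun s : ℝ => NormedSpace.exp (s • (A + B)) * NormedSpace.exp ((1 - s) • A))
        (NormedSpace.exp (s • (A + B)) * B * NormedSpace.exp ((1 - s) • A)) s := by
    intro s
    have ha : HasDerivAt (fun u : ℝ => NormedSpace.exp (u • (A + B)))
        (NormedSpace.exp (s • (A + B)) * (A + B)) s := hasDerivAt_exp_smul_const _ _
    have hb : HasDerivAt (fun u : ℝ => NormedSpace.exp ((1 - u) • A))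
        ((NormedSpace.exp ((1 - s) • A) * A) * (-1)) s := by
      have h1 : HasDerivAt (fun u : ℝ => (1:ℝ) - u) (-1) s := (hasDerivAt_id s).const_sub 1
      have h2 := hasDerivAt_exp_smul_const (𝕂 := ℝ) A ((1:ℝ) - s)
      have := HasDerivAt.scomp s h2 h1
      simpa [Function.comp_def, mul_comm] using this
    have hm := ha.mul hb
    convert hm using 1
    · rfl
    have hc : Commute A (NormedSpace.exp ((1 - s) • A)) :=
      (((Commute.refl A).smul_right (1 - s)).exp_right)
    rw [mul_neg_one, ← hc.eq]
    noncomm_ring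
  have hcont := my_cont3 (A + B) B A
  have := intervalIntegral.integral_eq_sub_of_hasDerivAt
    (fun s _ => hderiv s) (hcont.intervalIntegrable 0 1)
  rw [this]
  simp [NormedSpace.exp_zero]

private lemma my_exp_bound (A h : 𝔸) (hh : ‖h‖ ≤ 1) {s : ℝ} (hs : s ∈ Set.Icc (0:ℝ) 1) :
    ‖NormedSpace.exp (s • (A + h))‖ ≤ max 1 ‖(1 : 𝔸)‖ * Real.exp (‖A‖ + 1) := by
  refine (my_norm_exp_le _).trans ?_
  have h1 : ‖s • (A + h)‖ ≤ ‖A‖ + 1 := by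
    rw [norm_smul, Real.norm_eq_abs, abs_of_nonneg hs.1]
    have := norm_add_le A h
    nlinarith [hs.1, hs.2, norm_nonneg (A + h)]
  have h2 : Real.exp ‖s • (A + h)‖ ≤ Real.exp (‖A‖ + 1) := Real.exp_le_exp.2 h1
  have hM : (0:ℝ) ≤ max 1 ‖(1 : 𝔸)‖ := le_trans zero_le_one (le_max_left _ _)
  exact mul_le_mul_of_nonneg_left h2 hM

private lemma my_exp_hasFDerivAt (A : 𝔸) :
    ∃ L : 𝔸 →L[ℝ] 𝔸,
      (∀ B, L B = ∫ s in (0:ℝ)..1,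
        NormedSpace.exp (s • A) * B * NormedSpace.exp ((1 - s) • A)) ∧
      HasFDerivAt (NormedSpace.exp) L A := by
  set C : ℝ := max 1 ‖(1 : 𝔸)‖ * Real.exp (‖A‖ + 1) with hCdef
  have hC0 : 0 < C := by positivity
  have hbA : ∀ t : ℝ, t ∈ Set.Icc (0:ℝ) 1 → ‖NormedSpace.exp (t • A)‖ ≤ C := by
    intro t ht
    have := my_exp_bound A 0 (by simp) ht
    simpa using this
  have hintg : ∀ (X B : 𝔸), IntervalIntegrable
      (fun s : ℝ => NormedSpace.exp (s • X) * B * NormedSpace.exp ((1 - s) • A))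
      MeasureTheory.volume 0 1 := fun X B => (my_cont3 X B A).intervalIntegrable 0 1
  have hbound : ∀ B : 𝔸,
      ‖∫ s in (0:ℝ)..1,
        NormedSpace.exp (s • A) * B * NormedSpace.exp ((1 - s) • A)‖ ≤ C * C * ‖B‖ := by
    intro B
    have hptw : ∀ s ∈ Set.uIoc (0:ℝ) 1,
        ‖NormedSpace.exp (s • A) * B * NormedSpace.exp ((1 - s) • A)‖ ≤ C * ‖B‖ * C := by
      intro s hs
      rw [Set.uIoc_of_le (by norm_num : (0:ℝ) ≤ 1)] at hs
      have hs1 : s ∈ Set.Icc (0:ℝ) 1 := ⟨le_of_lt hs.1, hs.2⟩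
      have hs2 : (1 - s) ∈ Set.Icc (0:ℝ) 1 := ⟨by linarith [hs.2], by linarith [hs.1.le]⟩
      calc ‖NormedSpace.exp (s • A) * B * NormedSpace.exp ((1 - s) • A)‖
          ≤ ‖NormedSpace.exp (s • A) * B‖ * ‖NormedSpace.exp ((1 - s) • A)‖ :=
            norm_mul_le _ _
        _ ≤ ‖NormedSpace.exp (s • A)‖ * ‖B‖ * ‖NormedSpace.exp ((1 - s) • A)‖ :=
            mul_le_mul_of_nonneg_right (norm_mul_le _ _) (norm_nonneg _)
        _ ≤ C * ‖B‖ * C := by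
            gcongr
            · exact hbA s hs1
            · exact hbA _ hs2
    calc ‖∫ s in (0:ℝ)..1,
          NormedSpace.exp (s • A) * B * NormedSpace.exp ((1 - s) • A)‖
        ≤ C * ‖B‖ * C * |1 - 0| := intervalIntegral.norm_integral_le_of_norm_le_const hptw
      _ = C * C * ‖B‖ := by simp; ring
  refine ⟨LinearMap.mkContinuous
    { toFun := fun B => ∫ s in (0:ℝ)..1,
        NormedSpace.exp (s • A) * B * NormedSpace.exp ((1 - s) • A)
      map_add' := ?_
      map_smul' := ?_ } (C * C) hbound, fun B => rfl, ?_⟩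
  · intro B₁ B₂
    simp only [mul_add, add_mul]
    exact intervalIntegral.integral_add
      (by simpa [mul_assoc] using hintg A B₁) (by simpa [mul_assoc] using hintg A B₂)
  · intro c B
    simp only [mul_smul_comm, smul_mul_assoc, intervalIntegral.integral_smul, RingHom.id_apply]
  · rw [hasFDerivAt_iff_isLittleO_nhds_zero]
    have hcont2 : ∀ h : 𝔸, IntervalIntegrable
        (fun s : ℝ =>
          (NormedSpace.exp (s • (A + h)) - NormedSpace.exp (s • A)) * h *
            NormedSpace.exp ((1 - s) • A)) MeasureTheory.volume 0 1 := by
      intro h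
      have : (fun s : ℝ =>
          (NormedSpace.exp (s • (A + h)) - NormedSpace.exp (s • A)) * h *
            NormedSpace.exp ((1 - s) • A)) =
        fun s : ℝ =>
          NormedSpace.exp (s • (A + h)) * h * NormedSpace.exp ((1 - s) • A) -
            NormedSpace.exp (s • A) * h * NormedSpace.exp ((1 - s) • A) := by
        funext s; noncomm_ring
      rw [this]
      exact (hintg (A + h) h).sub (hintg A h)
    have key : ∀ h : 𝔸,
        NormedSpace.exp (A + h) - NormedSpace.exp A -
          (∫ s in (0:ℝ)..1,
            NormedSpace.exp (s • A) * h * NormedSpace.exp ((1 - s) • A)) =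
        ∫ s in (0:ℝ)..1,
          (NormedSpace.exp (s • (A + h)) - NormedSpace.exp (s • A)) * h *
            NormedSpace.exp ((1 - s) • A) := by
      intro h
      rw [my_exp_sub_exp A h,
        ← intervalIntegral.integral_sub (hintg (A + h) h) (hintg A h)]
      congr 1; funext s; noncomm_ring
    have hdiff : ∀ h : 𝔸, ‖h‖ ≤ 1 → ∀ s ∈ Set.Icc (0:ℝ) 1,
        ‖NormedSpace.exp (s • (A + h)) - NormedSpace.exp (s • A)‖ ≤ C * ‖h‖ * C := by
      intro h hh s hs
      have heq := my_exp_sub_exp (s • A) (s • h)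
      rw [← smul_add] at heq
      rw [heq]
      have hptw : ∀ u ∈ Set.uIoc (0:ℝ) 1,
          ‖NormedSpace.exp (u • (s • (A + h))) * (s • h) *
            NormedSpace.exp ((1 - u) • (s • A))‖ ≤ C * ‖h‖ * C := by
        intro u hu
        rw [Set.uIoc_of_le (by norm_num : (0:ℝ) ≤ 1)] at hu
        have hu1 : u ∈ Set.Icc (0:ℝ) 1 := ⟨hu.1.le, hu.2⟩
        have h1 : ‖NormedSpace.exp (u • (s • (A + h)))‖ ≤ C := by
          rw [smul_smul]
          refine my_exp_bound A h hh ⟨mul_nonneg hu1.1 hs.1, ?_⟩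
          calc u * s ≤ 1 * 1 := by
                exact mul_le_mul hu1.2 hs.2 hs.1 zero_le_one
            _ = 1 := by norm_num
        have h2 : ‖s • h‖ ≤ ‖h‖ := by
          rw [norm_smul, Real.norm_eq_abs, abs_of_nonneg hs.1]
          nlinarith [norm_nonneg h, hs.2]
        have h3 : ‖NormedSpace.exp ((1 - u) • (s • A))‖ ≤ C := by
          rw [smul_smul]
          refine hbA _ ⟨mul_nonneg (by linarith [hu1.2]) hs.1, ?_⟩
          calc (1 - u) * s ≤ 1 * 1 :=
                mul_le_mul (by linarith [hu1.1]) hs.2 hs.1 zero_le_one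
            _ = 1 := by norm_num
        calc ‖NormedSpace.exp (u • (s • (A + h))) * (s • h) *
              NormedSpace.exp ((1 - u) • (s • A))‖
            ≤ ‖NormedSpace.exp (u • (s • (A + h))) * (s • h)‖ *
              ‖NormedSpace.exp ((1 - u) • (s • A))‖ := norm_mul_le _ _
          _ ≤ ‖NormedSpace.exp (u • (s • (A + h)))‖ * ‖s • h‖ *
              ‖NormedSpace.exp ((1 - u) • (s • A))‖ :=
              mul_le_mul_of_nonneg_right (norm_mul_le _ _) (norm_nonneg _)
          _ ≤ C * ‖h‖ * C := by gcongr
      calc ‖∫ u in (0:ℝ)..1, NormedSpace.exp (u • (s • (A + h))) * (s • h) *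
            NormedSpace.exp ((1 - u) • (s • A))‖
          ≤ C * ‖h‖ * C * |1 - 0| :=
            intervalIntegral.norm_integral_le_of_norm_le_const hptw
        _ = C * ‖h‖ * C := by simp
    rw [Asymptotics.isLittleO_iff]
    intro ε hε
    have hδ : 0 < min 1 (ε / (C * C * C)) := lt_min one_pos (by positivity)
    filter_upwards [Metric.ball_mem_nhds (0 : 𝔸) hδ] with h hmem
    rw [Metric.mem_ball, dist_zero_right] at hmem
    have hh1 : ‖h‖ ≤ 1 := le_of_lt (lt_of_lt_of_le hmem (min_le_left _ _))
    have hh2 : ‖h‖ ≤ ε / (C * C * C) := le_of_lt (lt_of_lt_of_le hmem (min_le_right _ _))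
    show ‖NormedSpace.exp (A + h) - NormedSpace.exp A -
        (∫ s in (0:ℝ)..1,
          NormedSpace.exp (s • A) * h * NormedSpace.exp ((1 - s) • A))‖ ≤ ε * ‖h‖
    rw [key h]
    have hptw2 : ∀ s ∈ Set.uIoc (0:ℝ) 1,
        ‖(NormedSpace.exp (s • (A + h)) - NormedSpace.exp (s • A)) * h *
          NormedSpace.exp ((1 - s) • A)‖ ≤ C * ‖h‖ * C * ‖h‖ * C := by
      intro s hs
      rw [Set.uIoc_of_le (by norm_num : (0:ℝ) ≤ 1)] at hs
      have hs1 : s ∈ Set.Icc (0:ℝ) 1 := ⟨hs.1.le, hs.2⟩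
      have hs2 : (1 - s) ∈ Set.Icc (0:ℝ) 1 := ⟨by linarith [hs.2], by linarith [hs.1.le]⟩
      calc ‖(NormedSpace.exp (s • (A + h)) - NormedSpace.exp (s • A)) * h *
            NormedSpace.exp ((1 - s) • A)‖
          ≤ ‖(NormedSpace.exp (s • (A + h)) - NormedSpace.exp (s • A)) * h‖ *
            ‖NormedSpace.exp ((1 - s) • A)‖ := norm_mul_le _ _
        _ ≤ ‖NormedSpace.exp (s • (A + h)) - NormedSpace.exp (s • A)‖ * ‖h‖ *
            ‖NormedSpace.exp ((1 - s) • A)‖ :=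
            mul_le_mul_of_nonneg_right (norm_mul_le _ _) (norm_nonneg _)
        _ ≤ C * ‖h‖ * C * ‖h‖ * C := by
            gcongr
            · exact hdiff h hh1 s hs1
            · exact hbA _ hs2
    have hfin : ‖∫ s in (0:ℝ)..1,
        (NormedSpace.exp (s • (A + h)) - NormedSpace.exp (s • A)) * h *
          NormedSpace.exp ((1 - s) • A)‖ ≤ C * ‖h‖ * C * ‖h‖ * C := by
      have := intervalIntegral.norm_integral_le_of_norm_le_const hptw2
      simpa using this
    refine hfin.trans ?_
    have hCC : C * C * C * ‖h‖ ≤ ε := by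
      rw [div_eq_mul_inv] at hh2
      have := mul_le_mul_of_nonneg_left hh2 (le_of_lt (by positivity : (0:ℝ) < C * C * C))
      calc C * C * C * ‖h‖ ≤ C * C * C * (ε * (C * C * C)⁻¹) := this
        _ = ε := by field_simp
    nlinarith [norm_nonneg h, hC0]

end Aux

/-- Logarithmic derivative of the exponential map of a Banach–Lie group (realized as the
unit group of a Banach algebra, where `e^{s·ad x} y = e^{sx} y e^{-sx}`): for a `C¹` path
`α`, the right logarithmic derivative of `t ↦ exp(α(t))` equals
`∫₀¹ e^{s·ad α(t)} α'(t) ds`, i.e.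
`d/dt exp(α(t)) = (∫₀¹ e^{s α(t)} α'(t) e^{-s α(t)} ds) · exp(α(t))`;
in particular `δ(exp)_x(y) = ∫₀¹ e^{s·ad x} y ds`. -/
theorem stmt_19 {𝔸 : Type*} [NormedRing 𝔸] [NormedAlgebra ℝ 𝔸] [CompleteSpace 𝔸]
    (I : Set ℝ) (hI : IsOpen I)
    (α α' : ℝ → 𝔸)
    (hα : ∀ t ∈ I, HasDerivAt α (α' t) t)
    (hα' : ContinuousOn α' I) :
    ∀ t ∈ I,
      HasDerivAt (fun u => NormedSpace.exp (α u))
        ((∫ s in (0 : ℝ)..1,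
            NormedSpace.exp (s • α t) * α' t * NormedSpace.exp (-(s • α t))) *
          NormedSpace.exp (α t)) t := by
  intro t ht
  letI : NormedAlgebra ℚ 𝔸 := NormedAlgebra.restrictScalars ℚ ℝ 𝔸
  obtain ⟨L, hLapp, hL⟩ := my_exp_hasFDerivAt (α t)
  have hd := hL.comp_hasDerivAt t (hα t ht)
  rw [hLapp] at hd
  convert hd using 1
  · rfl
  · rfl
  have hint : IntervalIntegrable
      (fun s : ℝ => NormedSpace.exp (s • α t) * α' t * NormedSpace.exp (-(s • α t)))
      MeasureTheory.volume 0 1 := by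
    have h1 : Continuous fun s : ℝ => s • α t := continuous_id.smul continuous_const
    have h2 : Continuous fun s : ℝ => -(s • α t) := h1.neg
    exact (((NormedSpace.exp_continuous.comp h1).mul continuous_const).mul
      (NormedSpace.exp_continuous.comp h2)).intervalIntegrable 0 1
  have hcc := ((ContinuousLinearMap.mul ℝ 𝔸).flip
    (NormedSpace.exp (α t))).intervalIntegral_comp_comm hint
  simp only [ContinuousLinearMap.flip_apply, ContinuousLinearMap.mul_apply'] at hcc
  rw [← hcc]
  refine intervalIntegral.integral_congr fun s _ => ?_
  have hcomm : Commute (-(s • α t)) (α t) := ((Commute.refl (α t)).smul_left s).neg_left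
  have hexp : NormedSpace.exp (-(s • α t)) * NormedSpace.exp (α t)
      = NormedSpace.exp ((1 - s) • α t) := by
    rw [← NormedSpace.exp_add_of_commute hcomm]
    congr 1
    rw [sub_smul, one_smul]; abel
  rw [mul_assoc, hexp]
end
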